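/- Let Y be a real random variable with distribution function F, and let V be uniform on [0,1] independent of Y. Define the distributional transform F̃(x,V) = F(x⁻) + V·(F(x) − F(x⁻)), where F(x⁻) is the left limit of F at x. Then F̃(Y,V) is uniformly distributed on [0,1]. -/

import Mathlib

open MeasureTheory ProbabilityTheory Function Set Filter Topology


lemma dtaux_seq_left (y : ℝ) :
    Tendsto (fun n : ℕ => y - 1/(n+1)) atTop (𝓝[<] y) := by
  rw [tendsto_nhdsWithin_iff]
  constructor
  · have h := tendsto_one_div_add_atTop_nhds_zero_nat (𝕜 := ℝ)
    have : Tendsto (fun n : ℕ => y - 1/(n+1)) atTop (𝓝 (y - 0)) :=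
      tendsto_const_nhds.sub h
    simpa using this
  · refine Eventually.of_forall fun n => ?_
    have : (0:ℝ) < 1/(n+1) := by positivity
    simp only [mem_Iio]; linarith

lemma dtaux_leftLim {Ω : Type*} [MeasurableSpace Ω] (P : Measure Ω) [IsProbabilityMeasure P]
    (Y : Ω → ℝ) (F : ℝ → ℝ) (hF : ∀ x, F x = (P {ω | Y ω ≤ x}).toReal)
    (hmono : Monotone F) (y : ℝ) :
    leftLim F y = (P {ω | Y ω < y}).toReal := by
  have h1 : Tendsto (fun n : ℕ => F (y - 1/(n+1))) atTop (𝓝 (leftLim F y)) :=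
    (hmono.tendsto_leftLim y).comp (dtaux_seq_left y)
  have hU : {ω | Y ω < y} = ⋃ n : ℕ, {ω | Y ω ≤ y - 1/(n+1)} := by
    ext ω
    simp only [mem_setOf_eq, mem_iUnion]
    constructor
    · intro h
      obtain ⟨n, hn⟩ := exists_nat_one_div_lt (show (0:ℝ) < y - Y ω by linarith)
      exact ⟨n, by linarith⟩
    · rintro ⟨n, hn⟩
      have : (0:ℝ) < 1/(n+1) := by positivity
      linarith
  have hmonoset : Monotone (fun n : ℕ => {ω | Y ω ≤ y - 1/(n+1)}) := by
    intro n m hnm ω h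
    simp only [mem_setOf_eq] at *
    have : 1/((m:ℝ)+1) ≤ 1/((n:ℝ)+1) := by
      apply one_div_le_one_div_of_le (by positivity)
      exact_mod_cast by omega
    linarith
  have h2 : Tendsto (fun n : ℕ => P {ω | Y ω ≤ y - 1/(n+1)}) atTop (𝓝 (P {ω | Y ω < y})) := by
    rw [hU]
    exact tendsto_measure_iUnion_atTop hmonoset
  have h3 : Tendsto (fun n : ℕ => (P {ω | Y ω ≤ y - 1/(n+1)}).toReal) atTop
      (𝓝 ((P {ω | Y ω < y}).toReal)) :=
    (ENNReal.tendsto_toReal (measure_ne_top P _)).comp h2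
  have h4 : (fun n : ℕ => F (y - 1/(n+1))) = fun n : ℕ => (P {ω | Y ω ≤ y - 1/(n+1)}).toReal := by
    funext n; exact hF _
  rw [h4] at h1
  exact tendsto_nhds_unique h1 h3

lemma dtaux_right {Ω : Type*} [MeasurableSpace Ω] (P : Measure Ω) [IsProbabilityMeasure P]
    (Y : Ω → ℝ) (hY : Measurable Y) (F : ℝ → ℝ) (hF : ∀ x, F x = (P {ω | Y ω ≤ x}).toReal)
    (y : ℝ) :
    Tendsto (fun n : ℕ => F (y + 1/(n+1))) atTop (𝓝 (F y)) := by
  have hI : {ω | Y ω ≤ y} = ⋂ n : ℕ, {ω | Y ω ≤ y + 1/(n+1)} := by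
    ext ω
    simp only [mem_setOf_eq, mem_iInter]
    constructor
    · intro h n
      have : (0:ℝ) < 1/(n+1) := by positivity
      linarith
    · intro h
      by_contra hc
      push_neg at hc
      obtain ⟨n, hn⟩ := exists_nat_one_div_lt (show (0:ℝ) < Y ω - y by linarith)
      have := h n
      linarith
  have hanti : Antitone (fun n : ℕ => {ω | Y ω ≤ y + 1/(n+1)}) := by
    intro n m hnm ω h
    simp only [mem_setOf_eq] at *
    have : 1/((m:ℝ)+1) ≤ 1/((n:ℝ)+1) := by
      apply one_div_le_one_div_of_le (by positivity)
      exact_mod_cast by omega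
    linarith
  have h2 : Tendsto (fun n : ℕ => P {ω | Y ω ≤ y + 1/(n+1)}) atTop (𝓝 (P {ω | Y ω ≤ y})) := by
    rw [hI]
    exact tendsto_measure_iInter_atTop
      (fun n => (hY measurableSet_Iic).nullMeasurableSet) hanti ⟨0, measure_ne_top P _⟩
  have h3 := (ENNReal.tendsto_toReal (measure_ne_top P _)).comp h2
  have h4 : (fun n : ℕ => F (y + 1/(n+1))) = fun n : ℕ => (P {ω | Y ω ≤ y + 1/(n+1)}).toReal := by
    funext n; exact hF _
  rw [h4, hF y]
  exact h3

-- F tends to 1 at +infinity along naturals, and to 0 at -infinity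
lemma dtaux_top {Ω : Type*} [MeasurableSpace Ω] (P : Measure Ω) [IsProbabilityMeasure P]
    (Y : Ω → ℝ) (F : ℝ → ℝ) (hF : ∀ x, F x = (P {ω | Y ω ≤ x}).toReal) :
    Tendsto (fun n : ℕ => F n) atTop (𝓝 1) := by
  have hU : (Set.univ : Set Ω) = ⋃ n : ℕ, {ω | Y ω ≤ n} := by
    ext ω
    simp only [mem_univ, mem_iUnion, mem_setOf_eq, true_iff]
    obtain ⟨n, hn⟩ := exists_nat_gt (Y ω)
    exact ⟨n, hn.le⟩
  have hmono : Monotone (fun n : ℕ => {ω : Ω | Y ω ≤ n}) := by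
    intro n m hnm ω h
    simp only [mem_setOf_eq] at *
    exact h.trans (by exact_mod_cast hnm)
  have h2 : Tendsto (fun n : ℕ => P {ω | Y ω ≤ n}) atTop (𝓝 (P univ)) := by
    rw [show P univ = P (⋃ n : ℕ, {ω | Y ω ≤ (n:ℝ)}) from by rw [← hU]]
    exact tendsto_measure_iUnion_atTop hmono
  have h3 := (ENNReal.tendsto_toReal (measure_ne_top P _)).comp h2
  simp only [measure_univ, ENNReal.toReal_one] at h3
  have h4 : (fun n : ℕ => F n) = fun n : ℕ => (P {ω | Y ω ≤ n}).toReal := by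
    funext n; exact hF _
  rw [h4]; exact h3

lemma dtaux_bot {Ω : Type*} [MeasurableSpace Ω] (P : Measure Ω) [IsProbabilityMeasure P]
    (Y : Ω → ℝ) (hY : Measurable Y) (F : ℝ → ℝ) (hF : ∀ x, F x = (P {ω | Y ω ≤ x}).toReal) :
    Tendsto (fun n : ℕ => F (-n)) atTop (𝓝 0) := by
  have hI : (∅ : Set Ω) = ⋂ n : ℕ, {ω | Y ω ≤ -n} := by
    ext ω
    simp only [mem_empty_iff_false, mem_iInter, mem_setOf_eq, false_iff]
    push_neg
    obtain ⟨n, hn⟩ := exists_nat_gt (-Y ω)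
    exact ⟨n, by linarith⟩
  have hanti : Antitone (fun n : ℕ => {ω : Ω | Y ω ≤ -n}) := by
    intro n m hnm ω h
    simp only [mem_setOf_eq] at *
    refine h.trans ?_
    simp only [neg_le_neg_iff]
    exact_mod_cast hnm
  have h2 : Tendsto (fun n : ℕ => P {ω | Y ω ≤ -n}) atTop (𝓝 (P ∅)) := by
    rw [show P ∅ = P (⋂ n : ℕ, {ω | Y ω ≤ -(n:ℝ)}) from by rw [← hI]]
    exact tendsto_measure_iInter_atTop
      (fun n => (hY measurableSet_Iic).nullMeasurableSet) hanti ⟨0, measure_ne_top P _⟩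
  have h3 := (ENNReal.tendsto_toReal (measure_ne_top P _)).comp h2
  simp only [measure_empty, ENNReal.toReal_zero] at h3
  have h4 : (fun n : ℕ => F (-n)) = fun n : ℕ => (P {ω | Y ω ≤ -n}).toReal := by
    funext n; exact hF _
  rw [h4]; exact h3

section c
variable {Ω : Type*} [MeasurableSpace Ω] (P : Measure Ω) [IsProbabilityMeasure P]
  (Y V : Ω → ℝ)

-- V lands in (0,1] almost surely
lemma dtaux_N (hV : Measurable V) (hVunif : Measure.map V P = volume.restrict (Set.Icc (0:ℝ) 1)) :
    P {ω | V ω ∉ Set.Ioc (0:ℝ) 1} = 0 := by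
  have h1 : {ω | V ω ∉ Set.Ioc (0:ℝ) 1} = V ⁻¹' (Set.Ioc (0:ℝ) 1)ᶜ := rfl
  rw [h1, ← Measure.map_apply hV measurableSet_Ioc.compl, hVunif,
    Measure.restrict_apply measurableSet_Ioc.compl]
  refine measure_mono_null ?_ (Real.volume_singleton (a := 0))
  rintro x ⟨hx1, hx2, hx3⟩
  simp only [mem_compl_iff, mem_Ioc, not_and_or, not_lt, not_le] at hx1
  rcases hx1 with h | h
  · simpa using le_antisymm h hx2
  · exact absurd hx3 (not_le.2 h)

lemma dtaux_Vle (hV : Measurable V) (hVunif : Measure.map V P = volume.restrict (Set.Icc (0:ℝ) 1))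
    {c : ℝ} (hc0 : 0 ≤ c) (hc1 : c ≤ 1) :
    P {ω | V ω ≤ c} = ENNReal.ofReal c := by
  have h1 : {ω | V ω ≤ c} = V ⁻¹' (Set.Iic c) := rfl
  rw [h1, ← Measure.map_apply hV measurableSet_Iic, hVunif,
    Measure.restrict_apply measurableSet_Iic]
  have : Set.Iic c ∩ Set.Icc 0 1 = Set.Icc 0 c := by
    ext x
    simp only [mem_inter_iff, mem_Iic, mem_Icc]
    constructor
    · rintro ⟨h1, h2, h3⟩; exact ⟨h2, h1⟩
    · rintro ⟨h1, h2⟩; exact ⟨h2, h1, h2.trans hc1⟩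
  rw [this, Real.volume_Icc, sub_zero]

end c

lemma dtaux_main {Ω : Type*} [MeasurableSpace Ω] (P : Measure Ω) [IsProbabilityMeasure P]
    (Y V : Ω → ℝ) (hY : Measurable Y) (hV : Measurable V)
    (hVunif : Measure.map V P = volume.restrict (Set.Icc (0:ℝ) 1))
    (hindep : IndepFun Y V P)
    (F : ℝ → ℝ) (hF : ∀ x, F x = (P {ω | Y ω ≤ x}).toReal)
    {t : ℝ} (ht0 : 0 < t) (ht1 : t < 1) :
    P {ω | leftLim F (Y ω) + V ω * (F (Y ω) - leftLim F (Y ω)) ≤ t} = ENNReal.ofReal t := by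
  have hmono : Monotone F := fun a b hab => by
    rw [hF, hF]
    exact ENNReal.toReal_mono (measure_ne_top P _)
      (measure_mono fun ω (h : Y ω ≤ a) => h.trans hab)
  set G := leftLim F with hGdef
  have hGF : ∀ y, G y ≤ F y := fun y => hmono.leftLim_le le_rfl
  have hG : ∀ y, G y = (P {ω | Y ω < y}).toReal := dtaux_leftLim P Y F hF hmono
  have hG0 : ∀ y, 0 ≤ G y := fun y => (hG y) ▸ ENNReal.toReal_nonneg
  have hPle : ∀ y, P {ω | Y ω ≤ y} = ENNReal.ofReal (F y) := fun y => by
    rw [hF]; exact (ENNReal.ofReal_toReal (measure_ne_top P _)).symm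
  have hPlt : ∀ y, P {ω | Y ω < y} = ENNReal.ofReal (G y) := fun y => by
    rw [hG]; exact (ENNReal.ofReal_toReal (measure_ne_top P _)).symm
  -- the quantile
  have hSne : {x | t ≤ F x}.Nonempty := by
    obtain ⟨n, hn⟩ := ((dtaux_top P Y F hF).eventually (eventually_gt_nhds ht1)).exists
    exact ⟨n, hn.le⟩
  have hSbdd : BddBelow {x | t ≤ F x} := by
    obtain ⟨n, hn⟩ := ((dtaux_bot P Y hY F hF).eventually (eventually_lt_nhds ht0)).exists
    refine ⟨-n, fun x hx => ?_⟩
    by_contra hcon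
    push_neg at hcon
    exact absurd (hx.trans (hmono hcon.le)) (not_le.2 hn)
  set q := sInf {x | t ≤ F x} with hqdef
  have hq2 : t ≤ F q := by
    refine ge_of_tendsto' (dtaux_right P Y hY F hF q) fun n => ?_
    have hlt : sInf {x | t ≤ F x} < q + 1/(n+1) := by
      rw [← hqdef]
      have : (0:ℝ) < 1/(n+1) := by positivity
      linarith
    obtain ⟨s, hs, hsq⟩ := (csInf_lt_iff hSbdd hSne).1 hlt
    exact hs.trans (hmono hsq.le)
  have hq1 : ∀ u, u < q → F u < t := by
    intro u hu
    by_contra hcon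
    push_neg at hcon
    exact absurd (csInf_le hSbdd hcon) (not_le.2 hu)
  have hq3 : G q ≤ t :=
    le_of_tendsto (hmono.tendsto_leftLim q)
      (eventually_nhdsWithin_of_forall fun u hu => (hq1 u hu).le)
  -- events
  set N := {ω | V ω ∉ Set.Ioc (0:ℝ) 1} with hNdef
  have hN : P N = 0 := dtaux_N P V hV hVunif
  set E := {ω | G (Y ω) + V ω * (F (Y ω) - G (Y ω)) ≤ t} with hEdef
  have hEmeas : MeasurableSet E := by
    have hFmeas : Measurable F := hmono.measurable
    have hGmeas : Measurable G := hmono.leftLim.measurable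
    exact measurableSet_le
      ((hGmeas.comp hY).add (hV.mul ((hFmeas.comp hY).sub (hGmeas.comp hY)))) measurable_const
  have hEsplit : E = (E ∩ {ω | Y ω < q}) ∪ ((E ∩ {ω | Y ω = q}) ∪ (E ∩ {ω | q < Y ω})) := by
    ext ω
    simp only [mem_union, mem_inter_iff, mem_setOf_eq]
    constructor
    · intro h
      rcases lt_trichotomy (Y ω) q with h' | h' | h'
      · exact Or.inl ⟨h, h'⟩
      · exact Or.inr (Or.inl ⟨h, h'⟩)
      · exact Or.inr (Or.inr ⟨h, h'⟩)
    · rintro (⟨h, _⟩ | ⟨h, _⟩ | ⟨h, _⟩) <;> exact h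
  -- part (a)
  have ha : P (E ∩ {ω | Y ω < q}) = ENNReal.ofReal (G q) := by
    have hsub : {ω | Y ω < q} ⊆ (E ∩ {ω | Y ω < q}) ∪ N := by
      intro ω hω
      by_cases hVω : V ω ∈ Set.Ioc (0:ℝ) 1
      · left
        refine ⟨?_, hω⟩
        have h1 : F (Y ω) < t := hq1 _ hω
        have h2 : G (Y ω) ≤ F (Y ω) := hGF _
        have h3 : 0 < V ω := hVω.1
        have h4 : V ω ≤ 1 := hVω.2
        show G (Y ω) + V ω * (F (Y ω) - G (Y ω)) ≤ t
        nlinarith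
      · exact Or.inr hVω
    refine le_antisymm ?_ ?_
    · calc P (E ∩ {ω | Y ω < q}) ≤ P {ω | Y ω < q} := measure_mono inter_subset_right
        _ = ENNReal.ofReal (G q) := hPlt q
    · calc ENNReal.ofReal (G q) = P {ω | Y ω < q} := (hPlt q).symm
        _ ≤ P ((E ∩ {ω | Y ω < q}) ∪ N) := measure_mono hsub
        _ ≤ P (E ∩ {ω | Y ω < q}) + P N := measure_union_le _ _
        _ = P (E ∩ {ω | Y ω < q}) := by rw [hN, add_zero]
  -- point mass at q
  have hpt : P {ω | Y ω = q} = ENNReal.ofReal (F q - G q) := by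
    have hsetq : {ω | Y ω = q} = {ω | Y ω ≤ q} \ {ω | Y ω < q} := by
      ext ω
      simp only [mem_setOf_eq, mem_diff, not_lt]
      constructor
      · intro h; exact ⟨h.le, h.ge⟩
      · rintro ⟨h1, h2⟩; exact le_antisymm h1 h2
    rw [hsetq, measure_diff (s₁ := {ω | Y ω ≤ q}) (s₂ := {ω | Y ω < q})
      (fun ω (h : Y ω < q) => h.le)
      ((hY measurableSet_Iio).nullMeasurableSet) (measure_ne_top P _),
      hPle, hPlt, ← ENNReal.ofReal_sub _ (hG0 q)]
  -- part (b)
  have hb : P (E ∩ {ω | Y ω = q}) = ENNReal.ofReal (t - G q) := by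
    rcases eq_or_lt_of_le (hGF q) with hΔ | hΔ
    · have ht_eq : t = G q := le_antisymm (hΔ ▸ hq2) hq3
      have h0 : P (E ∩ {ω | Y ω = q}) = 0 :=
        measure_mono_null inter_subset_right
          (by rw [hpt, ← hΔ, sub_self, ENNReal.ofReal_zero])
      rw [h0, show t - G q = 0 from by rw [ht_eq, sub_self], ENNReal.ofReal_zero]
    · set c := (t - G q) / (F q - G q) with hc
      have hΔpos : 0 < F q - G q := sub_pos.2 hΔ
      have hc0 : 0 ≤ c := div_nonneg (sub_nonneg.2 hq3) hΔpos.le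
      have hc1 : c ≤ 1 := (div_le_one hΔpos).2 (by linarith)
      have hEq : E ∩ {ω | Y ω = q} = Y ⁻¹' {q} ∩ V ⁻¹' (Set.Iic c) := by
        ext ω
        simp only [hEdef, mem_inter_iff, mem_setOf_eq, mem_preimage, mem_singleton_iff, mem_Iic]
        constructor
        · rintro ⟨hE, hq⟩
          rw [hq] at hE
          refine ⟨hq, ?_⟩
          rw [hc, le_div_iff₀ hΔpos]
          linarith
        · rintro ⟨hq, hVc⟩
          have h1 := (le_div_iff₀ hΔpos).1 (hc ▸ hVc)
          refine ⟨?_, hq⟩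
          rw [hq]
          linarith
      rw [hEq, hindep.measure_inter_preimage_eq_mul _ _ (measurableSet_singleton q)
        measurableSet_Iic]
      have h1 : Y ⁻¹' {q} = {ω | Y ω = q} := rfl
      have h2 : V ⁻¹' (Set.Iic c) = {ω | V ω ≤ c} := rfl
      rw [h1, h2, hpt, dtaux_Vle P V hV hVunif hc0 hc1,
        ← ENNReal.ofReal_mul hΔpos.le]
      congr 1
      rw [hc]
      field_simp
  -- part (c)
  have hcnull : P (E ∩ {ω | q < Y ω}) = 0 := by
    set B := {y : ℝ | q < y ∧ F y ≤ t} with hBdef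
    have hkey : ∀ y ∈ B, P (Y ⁻¹' Set.Ioc q y) = 0 := by
      rintro y ⟨hy1, hy2⟩
      have hFy : F y = F q := le_antisymm (hy2.trans hq2) (hmono hy1.le)
      have hIoc : Y ⁻¹' Set.Ioc q y = {ω | Y ω ≤ y} \ {ω | Y ω ≤ q} := by
        ext ω
        simp only [mem_preimage, mem_Ioc, mem_diff, mem_setOf_eq, not_le]
        tauto
      rw [hIoc, measure_diff (s₁ := {ω | Y ω ≤ y}) (s₂ := {ω | Y ω ≤ q})
        (fun ω (h : Y ω ≤ q) => le_trans h hy1.le)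
        ((hY measurableSet_Iic).nullMeasurableSet) (measure_ne_top P _),
        hPle, hPle, hFy, tsub_self]
    have hsub : E ∩ {ω | q < Y ω} ⊆ N ∪ Y ⁻¹' B := by
      rintro ω ⟨hE, hgt⟩
      by_cases hVω : V ω ∈ Set.Ioc (0:ℝ) 1
      · right
        have h1 : F q ≤ G (Y ω) := hmono.le_leftLim hgt
        have h2 : G (Y ω) ≤ F (Y ω) := hGF _
        have h3 : 0 < V ω := hVω.1
        have hE' : G (Y ω) + V ω * (F (Y ω) - G (Y ω)) ≤ t := hE
        refine ⟨hgt, ?_⟩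
        have hVnn : 0 ≤ V ω * (F (Y ω) - G (Y ω)) :=
          mul_nonneg h3.le (sub_nonneg.2 h2)
        have h4 : V ω * (F (Y ω) - G (Y ω)) ≤ 0 := by linarith
        have h5 : F (Y ω) - G (Y ω) ≤ 0 := by
          by_contra hcon
          push_neg at hcon
          exact absurd h4 (not_le.2 (mul_pos h3 hcon))
        linarith
      · exact Or.inl hVω
    have hBnull : P (Y ⁻¹' B) = 0 := by
      by_cases hmax : ∃ m ∈ B, ∀ y ∈ B, y ≤ m
      · obtain ⟨m, hm, hmx⟩ := hmax
        refine measure_mono_null (fun ω hω => ?_) (hkey m hm)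
        exact ⟨hω.1, hmx _ hω⟩
      · push_neg at hmax
        obtain ⟨T, hTc, hTeq⟩ := TopologicalSpace.isOpen_iUnion_countable
          (fun b : B => Set.Ioo q (b : ℝ)) (fun _ => isOpen_Ioo)
        have hcover : Y ⁻¹' B ⊆ Y ⁻¹' (⋃ b ∈ T, Set.Ioo q ((b : B) : ℝ)) := by
          intro ω hω
          rw [hTeq]
          obtain ⟨y', hy', hlt⟩ := hmax _ hω
          exact mem_preimage.2 (mem_iUnion.2 ⟨⟨y', hy'⟩, hω.1, hlt⟩)
        refine measure_mono_null hcover ?_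
        rw [preimage_iUnion₂]
        refine (measure_biUnion_null_iff hTc).2 fun b _ => ?_
        exact measure_mono_null (preimage_mono Set.Ioo_subset_Ioc_self) (hkey b b.2)
    refine le_antisymm ?_ zero_le
    calc P (E ∩ {ω | q < Y ω}) ≤ P (N ∪ Y ⁻¹' B) := measure_mono hsub
      _ ≤ P N + P (Y ⁻¹' B) := measure_union_le _ _
      _ = 0 := by rw [hN, hBnull, add_zero]
  -- assemble
  have hd2 : Disjoint (E ∩ {ω | Y ω = q}) (E ∩ {ω | q < Y ω}) := by
    rw [Set.disjoint_left]
    rintro ω ⟨_, h1⟩ ⟨_, h2⟩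
    simp only [mem_setOf_eq] at h1 h2
    exact absurd (h1 ▸ h2) (lt_irrefl q)
  have hd1 : Disjoint (E ∩ {ω | Y ω < q}) ((E ∩ {ω | Y ω = q}) ∪ (E ∩ {ω | q < Y ω})) := by
    rw [Set.disjoint_left]
    rintro ω ⟨_, h1⟩ (⟨_, h2⟩ | ⟨_, h2⟩) <;>
      simp only [mem_setOf_eq] at h1 h2 <;> linarith
  rw [hEsplit,
    measure_union hd1 (((hEmeas.inter (hY (measurableSet_singleton q))).union
      (hEmeas.inter (hY measurableSet_Ioi)))),
    measure_union hd2 (hEmeas.inter (hY measurableSet_Ioi)),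
    ha, hb, hcnull, add_zero, ← ENNReal.ofReal_add (hG0 q) (sub_nonneg.2 hq3)]
  congr 1
  ring

/-- The distributional transform `F̃(Y,V) = F(Y⁻) + V·(F(Y) − F(Y⁻))` of a random
variable `Y` with cdf `F`, where `V` is uniform on `[0,1]` and independent of `Y`,
is uniformly distributed on `[0,1]`. -/
theorem stmt_0 {Ω : Type*} [MeasurableSpace Ω] (P : Measure Ω) [IsProbabilityMeasure P]
    (Y V : Ω → ℝ) (hY : Measurable Y) (hV : Measurable V)
    (hVunif : Measure.map V P = volume.restrict (Set.Icc (0:ℝ) 1))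
    (hindep : IndepFun Y V P)
    (F : ℝ → ℝ) (hF : ∀ x, F x = (P {ω | Y ω ≤ x}).toReal) :
    Measure.map (fun ω => leftLim F (Y ω) + V ω * (F (Y ω) - leftLim F (Y ω))) P
      = volume.restrict (Set.Icc (0:ℝ) 1) := by
  have hmono : Monotone F := fun a b hab => by
    rw [hF, hF]
    exact ENNReal.toReal_mono (measure_ne_top P _)
      (measure_mono fun ω (h : Y ω ≤ a) => h.trans hab)
  have hF1 : ∀ x, F x ≤ 1 := fun x => by
    rw [hF]
    calc (P {ω | Y ω ≤ x}).toReal ≤ (P univ).toReal :=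
          ENNReal.toReal_mono (measure_ne_top P _) (measure_mono (subset_univ _))
      _ = 1 := by simp
  have hGF : ∀ y, leftLim F y ≤ F y := fun y => hmono.leftLim_le le_rfl
  have hD : Measurable (fun ω => leftLim F (Y ω) + V ω * (F (Y ω) - leftLim F (Y ω))) :=
    ((hmono.leftLim.measurable.comp hY).add
      (hV.mul ((hmono.measurable.comp hY).sub (hmono.leftLim.measurable.comp hY))))
  have hprob : IsProbabilityMeasure
      (Measure.map (fun ω => leftLim F (Y ω) + V ω * (F (Y ω) - leftLim F (Y ω))) P) :=
    Measure.isProbabilityMeasure_map hD.aemeasurable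
  refine Measure.ext_of_Iic _ _ fun a => ?_
  rw [Measure.map_apply hD measurableSet_Iic, Measure.restrict_apply measurableSet_Iic]
  have hpre : (fun ω => leftLim F (Y ω) + V ω * (F (Y ω) - leftLim F (Y ω))) ⁻¹' Set.Iic a
      = {ω | leftLim F (Y ω) + V ω * (F (Y ω) - leftLim F (Y ω)) ≤ a} := rfl
  rw [hpre]
  rcases le_or_gt a 0 with ha0 | ha0
  · -- a ≤ 0 : both sides vanish
    have hRHS : volume (Set.Iic a ∩ Set.Icc (0:ℝ) 1) = 0 := by
      refine measure_mono_null ?_ (Real.volume_singleton (a := 0))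
      rintro x ⟨hx1, hx2, _⟩
      exact le_antisymm (hx1.trans ha0) hx2
    have hle : ∀ n : ℕ,
        P {ω | leftLim F (Y ω) + V ω * (F (Y ω) - leftLim F (Y ω)) ≤ a}
          ≤ ENNReal.ofReal (1/((n:ℝ)+2)) := by
      intro n
      have ht0 : (0:ℝ) < 1/((n:ℝ)+2) := by positivity
      have ht1 : 1/((n:ℝ)+2) < 1 := by
        rw [div_lt_one (by positivity)]
        have : (0:ℝ) ≤ (n:ℝ) := n.cast_nonneg
        linarith
      rw [← dtaux_main P Y V hY hV hVunif hindep F hF ht0 ht1]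
      refine measure_mono fun ω h => ?_
      simp only [mem_setOf_eq] at h ⊢
      linarith
    have htend : Tendsto (fun n : ℕ => ENNReal.ofReal (1/((n:ℝ)+2))) atTop (𝓝 0) := by
      rw [show (0:ENNReal) = ENNReal.ofReal 0 from by simp]
      refine ENNReal.tendsto_ofReal ?_
      have h1 := (tendsto_one_div_add_atTop_nhds_zero_nat (𝕜 := ℝ)).comp (tendsto_add_atTop_nat 1)
      convert h1 using 2 with n
      simp only [comp_apply]
      push_cast
      ring
    have h0 : P {ω | leftLim F (Y ω) + V ω * (F (Y ω) - leftLim F (Y ω)) ≤ a} = 0 :=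
      le_antisymm (ge_of_tendsto' htend hle) zero_le
    rw [h0, hRHS]
  · rcases lt_or_ge a 1 with ha1 | ha1
    · rw [dtaux_main P Y V hY hV hVunif hindep F hF ha0 ha1]
      have : Set.Iic a ∩ Set.Icc (0:ℝ) 1 = Set.Icc 0 a := by
        ext x
        simp only [mem_inter_iff, mem_Iic, mem_Icc]
        constructor
        · rintro ⟨h1, h2, _⟩; exact ⟨h2, h1⟩
        · rintro ⟨h1, h2⟩; exact ⟨h2, h1, h2.trans ha1.le⟩
      rw [this, Real.volume_Icc, sub_zero]
    · -- 1 ≤ a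
      have hN := dtaux_N P V hV hVunif
      have h1 : P {ω | leftLim F (Y ω) + V ω * (F (Y ω) - leftLim F (Y ω)) ≤ a} = 1 := by
        refine le_antisymm prob_le_one ?_
        calc (1:ENNReal) = P univ := measure_univ.symm
          _ ≤ P ({ω | leftLim F (Y ω) + V ω * (F (Y ω) - leftLim F (Y ω)) ≤ a}
              ∪ {ω | V ω ∉ Set.Ioc (0:ℝ) 1}) := by
              refine measure_mono fun ω _ => ?_
              by_cases hVω : V ω ∈ Set.Ioc (0:ℝ) 1
              · left
                have h2 : leftLim F (Y ω) ≤ F (Y ω) := hGF _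
                have h3 : 0 < V ω := hVω.1
                have h4 : V ω ≤ 1 := hVω.2
                have h5 : F (Y ω) ≤ 1 := hF1 _
                show leftLim F (Y ω) + V ω * (F (Y ω) - leftLim F (Y ω)) ≤ a
                nlinarith
              · exact Or.inr hVω
          _ ≤ P {ω | leftLim F (Y ω) + V ω * (F (Y ω) - leftLim F (Y ω)) ≤ a}
              + P {ω | V ω ∉ Set.Ioc (0:ℝ) 1} := measure_union_le _ _
          _ = P {ω | leftLim F (Y ω) + V ω * (F (Y ω) - leftLim F (Y ω)) ≤ a} := by
              rw [hN, add_zero]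
      have : Set.Iic a ∩ Set.Icc (0:ℝ) 1 = Set.Icc 0 1 := by
        ext x
        simp only [mem_inter_iff, mem_Iic, mem_Icc]
        constructor
        · rintro ⟨_, h2, h3⟩; exact ⟨h2, h3⟩
        · rintro ⟨h2, h3⟩; exact ⟨h3.trans ha1, h2, h3⟩
      rw [h1, this, Real.volume_Icc, sub_zero, ENNReal.ofReal_one]
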